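/- Let G and H be finite connected simple graphs, each with at least two vertices, such that both G and H admit feasible maximum total mutual-visibility sets. Then μt(G ⊠ H) ≥ μt(G)·n(H) + μt(H)·n(G) − μt(G)·μt(H). -/

import Mathlib

open SimpleGraph

/-- Vertices `x` and `y` are `X`-visible in `G`: some shortest `x,y`-path has
no internal vertex in `X`. -/
def Visible {V : Type*} (G : SimpleGraph V) (X : Set V) (x y : V) : Prop :=
  ∃ p : G.Walk x y, p.length = G.dist x y ∧ ∀ v ∈ p.support, v ∈ X → v = x ∨ v = y

/-- `X` is a mutual-visibility set of `G`: every two vertices of `X` are `X`-visible. -/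
def IsMVSet {V : Type*} (G : SimpleGraph V) (X : Set V) : Prop :=
  ∀ x ∈ X, ∀ y ∈ X, Visible G X x y

/-- `X` is a total mutual-visibility set of `G`: every two vertices of `G` are
`X`-visible. -/
def IsTMVSet {V : Type*} (G : SimpleGraph V) (X : Set V) : Prop :=
  ∀ x y : V, Visible G X x y

/-- The mutual-visibility number of `G`: the maximum cardinality of a
mutual-visibility set. -/
noncomputable def mu {V : Type*} (G : SimpleGraph V) : ℕ :=
  sSup {n | ∃ X : Set V, IsMVSet G X ∧ X.ncard = n}

/-- The total mutual-visibility number of `G`: the maximum cardinality of a total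
mutual-visibility set. -/
noncomputable def muT {V : Type*} (G : SimpleGraph V) : ℕ :=
  sSup {n | ∃ X : Set V, IsTMVSet G X ∧ X.ncard = n}

/-- A feasible total mutual-visibility set: a total mutual-visibility set `S` such that
any two adjacent vertices of `S` have a common neighbor outside `S`. -/
def IsFeasibleTMVSet {V : Type*} (G : SimpleGraph V) (S : Set V) : Prop :=
  IsTMVSet G S ∧ ∀ x ∈ S, ∀ y ∈ S, G.Adj x y → ∃ z ∉ S, G.Adj x z ∧ G.Adj y z

/-- The strong product of two simple graphs. -/
def strongProd {α β : Type*} (G : SimpleGraph α) (H : SimpleGraph β) :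
    SimpleGraph (α × β) where
  Adj x y := (G.Adj x.1 y.1 ∧ x.2 = y.2) ∨ (x.1 = y.1 ∧ H.Adj x.2 y.2) ∨
    (G.Adj x.1 y.1 ∧ H.Adj x.2 y.2)
  symm := by
    constructor
    rintro ⟨a, b⟩ ⟨c, d⟩ (⟨h1, h2⟩ | ⟨h1, h2⟩ | ⟨h1, h2⟩)
    · exact Or.inl ⟨h1.symm, h2.symm⟩
    · exact Or.inr (Or.inl ⟨h1.symm, h2.symm⟩)
    · exact Or.inr (Or.inr ⟨h1.symm, h2.symm⟩)
  loopless := by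
    constructor
    rintro ⟨a, b⟩ (⟨h, _⟩ | ⟨_, h⟩ | ⟨h, _⟩)
    · exact G.irrefl h
    · exact H.irrefl h
    · exact G.irrefl h

/-- The iterated (associative) strong product of a finite family of graphs:
two tuples are adjacent iff they are distinct and agree or are adjacent in every
coordinate. -/
def strongProdPi {k : ℕ} {V : Fin k → Type*} (G : ∀ i, SimpleGraph (V i)) :
    SimpleGraph (∀ i, V i) where
  Adj x y := x ≠ y ∧ ∀ i, x i = y i ∨ (G i).Adj (x i) (y i)
  symm := by
    constructor
    rintro x y ⟨hne, h⟩
    exact ⟨hne.symm, fun i => (h i).imp Eq.symm fun hh => (G i).adj_symm hh⟩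
  loopless := ⟨fun x h => h.1 rfl⟩

/-- A universal vertex: adjacent to all other vertices. -/
def IsUniversal {V : Type*} (G : SimpleGraph V) (v : V) : Prop :=
  ∀ u : V, u ≠ v → G.Adj v u

/-- A cut vertex: its removal disconnects the graph. -/
def IsCutVertex {V : Type*} (G : SimpleGraph V) (v : V) : Prop :=
  ¬ (G.induce ({v}ᶜ : Set V)).Preconnected

/-- An induced path: a path with no chords between its vertices. -/
def IsInducedPath {V : Type*} (G : SimpleGraph V) {u v : V} (p : G.Walk u v) : Prop :=
  p.IsPath ∧ ∀ a b : V, a ∈ p.support → b ∈ p.support → G.Adj a b → s(a, b) ∈ p.edges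

/-- A block graph: a connected graph in which every pair of vertices is joined
by a unique induced path. -/
def IsBlockGraph {V : Type*} (G : SimpleGraph V) : Prop :=
  G.Connected ∧ ∀ u v : V, ∃! p : G.Walk u v, IsInducedPath G p

/-- A convex set of vertices: every shortest path of `G` between two of its
vertices stays inside the set. -/
def IsConvexSet {V : Type*} (G : SimpleGraph V) (A : Set V) : Prop :=
  ∀ x ∈ A, ∀ y ∈ A, ∀ p : G.Walk x y, p.length = G.dist x y → ∀ v ∈ p.support, v ∈ A

/-- A cactus graph: a connected graph in which every edge lies in at most one cycle,
i.e. two cycles sharing an edge have the same edge set. -/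
def IsCactus {V : Type*} (G : SimpleGraph V) : Prop :=
  G.Connected ∧ ∀ (v : V) (p q : G.Walk v v), p.IsCycle → q.IsCycle →
    ∀ e, e ∈ p.edges → e ∈ q.edges → ∀ e', e' ∈ p.edges ↔ e' ∈ q.edges

/-- A cograph: obtained from a single vertex by repeatedly adding twins, i.e. there is
an enumeration of the vertices in which every vertex except the first is, at the
moment of its addition, a (true or false) twin of some earlier vertex in the induced
subgraph on the vertices added so far. -/
def IsCograph {V : Type*} (G : SimpleGraph V) : Prop :=
  ∃ l : List V, l.Nodup ∧ (∀ v : V, v ∈ l) ∧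
    ∀ i : Fin l.length, (i : ℕ) ≠ 0 →
      ∃ j : Fin l.length, (j : ℕ) < (i : ℕ) ∧
        ∀ z ∈ l.take ((i : ℕ) + 1), z ≠ l.get i → z ≠ l.get j →
          (G.Adj (l.get i) z ↔ G.Adj (l.get j) z)

/-- An enabling vertex: a vertex `v` adjacent to every vertex `u` of `G - v` whose
degree in `G - v` is less than `n(G) - 2`. -/
def IsEnabling {V : Type*} [Fintype V] (G : SimpleGraph V) (v : V) : Prop :=
  ∀ u : V, u ≠ v → (G.neighborSet u \ {v}).ncard < Fintype.card V - 2 → G.Adj v u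

section Aux

open SimpleGraph Walk

/-- Build a walk from a function `f : ℕ → V` whose consecutive values are adjacent. -/
def walkOfFn {V : Type*} (G : SimpleGraph V) (f : ℕ → V) :
    ∀ n : ℕ, (∀ i < n, G.Adj (f i) (f (i + 1))) → G.Walk (f 0) (f n)
  | 0, _ => SimpleGraph.Walk.nil
  | n + 1, hadj =>
      (walkOfFn G f n fun i hi => hadj i (Nat.lt_succ_of_lt hi)).concat
        (hadj n (Nat.lt_succ_self n))

lemma walkOfFn_length {V : Type*} (G : SimpleGraph V) (f : ℕ → V) (n : ℕ)
    (hadj : ∀ i < n, G.Adj (f i) (f (i + 1))) : (walkOfFn G f n hadj).length = n := by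
  induction n with
  | zero => rfl
  | succ n ih => simp [walkOfFn, SimpleGraph.Walk.length_concat, ih]

lemma walkOfFn_support {V : Type*} (G : SimpleGraph V) (f : ℕ → V) (n : ℕ)
    (hadj : ∀ i < n, G.Adj (f i) (f (i + 1))) :
    ∀ v ∈ (walkOfFn G f n hadj).support, ∃ i, i ≤ n ∧ v = f i := by
  induction n with
  | zero =>
      intro v hv
      simp only [walkOfFn, SimpleGraph.Walk.support_nil, List.mem_singleton] at hv
      exact ⟨0, le_refl 0, hv⟩
  | succ n ih =>
      intro v hv
      simp only [walkOfFn, SimpleGraph.Walk.support_concat, List.concat_eq_append,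
        List.mem_append, List.mem_singleton] at hv
      rcases hv with hv | hv
      · obtain ⟨i, hi, rfl⟩ := ih _ v hv
        exact ⟨i, Nat.le_succ_of_le hi, rfl⟩
      · exact ⟨n + 1, le_refl _, hv⟩

lemma getVert_mem_support' {V : Type*} {G : SimpleGraph V} {u v : V} (p : G.Walk u v) (i : ℕ) :
    p.getVert i ∈ p.support := by
  induction p generalizing i with
  | nil => cases i <;> simp [SimpleGraph.Walk.getVert]
  | cons h q ih =>
      cases i with
      | zero => simp [SimpleGraph.Walk.getVert]
      | succ i =>
          simp only [SimpleGraph.Walk.getVert, SimpleGraph.Walk.support_cons, List.mem_cons]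
          exact Or.inr (ih i)

/-- An internal vertex of a shortest walk avoiding `S` internally is not in `S`. -/
lemma internal_notMem {V : Type*} {G : SimpleGraph V} {u v : V} (S : Set V) (p : G.Walk u v)
    (hp : p.length = G.dist u v) (hvis : ∀ w ∈ p.support, w ∈ S → w = u ∨ w = v)
    {i : ℕ} (h0 : 0 < i) (hi : i < p.length) : p.getVert i ∉ S := by
  intro hmem
  rcases hvis _ (getVert_mem_support' p i) hmem with he | he
  · -- the vertex equals the start: the tail of the walk is strictly shorter
    have hadj : ∀ t < p.length - i, G.Adj ((fun t => p.getVert (i + t)) t)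
        ((fun t => p.getVert (i + t)) (t + 1)) := by
      intro t ht
      have := p.adj_getVert_succ (i := i + t) (by omega)
      simpa [Nat.add_assoc] using this
    have hd := SimpleGraph.dist_le (walkOfFn G (fun t => p.getVert (i + t)) (p.length - i) hadj)
    rw [walkOfFn_length] at hd
    have e1 : p.getVert (i + 0) = u := by simpa using he
    have e2 : p.getVert (i + (p.length - i)) = v := by
      rw [Nat.add_sub_cancel' hi.le]; exact p.getVert_length
    rw [e1, e2] at hd
    omega
  · -- the vertex equals the end: the initial segment is strictly shorter
    have hadj : ∀ t < i, G.Adj (p.getVert t) (p.getVert (t + 1)) := by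
      intro t ht
      exact p.adj_getVert_succ (by omega)
    have hd := SimpleGraph.dist_le (walkOfFn G (fun t => p.getVert t) i hadj)
    rw [walkOfFn_length] at hd
    rw [p.getVert_zero, he] at hd
    omega

/-- Projection to the first factor doesn't increase length. -/
lemma dist_fst_le {α β : Type*} {G : SimpleGraph α} {H : SimpleGraph β} (hG : G.Connected)
    {x y : α × β} (W : (strongProd G H).Walk x y) : G.dist x.1 y.1 ≤ W.length := by
  induction W with
  | nil => simp
  | @cons a b c hadj p ih =>
      have h1 : G.dist a.1 b.1 ≤ 1 := by
        rcases hadj with ⟨h, -⟩ | ⟨h, -⟩ | ⟨h, -⟩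
        · exact le_of_eq (SimpleGraph.dist_eq_one_iff_adj.mpr h)
        · rw [h]; simp [SimpleGraph.dist_self]
        · exact le_of_eq (SimpleGraph.dist_eq_one_iff_adj.mpr h)
      calc G.dist a.1 c.1 ≤ G.dist a.1 b.1 + G.dist b.1 c.1 := hG.dist_triangle
        _ ≤ 1 + p.length := Nat.add_le_add h1 ih
        _ = (p.cons hadj).length := by rw [SimpleGraph.Walk.length_cons]; omega

/-- Projection to the second factor doesn't increase length. -/
lemma dist_snd_le {α β : Type*} {G : SimpleGraph α} {H : SimpleGraph β} (hH : H.Connected)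
    {x y : α × β} (W : (strongProd G H).Walk x y) : H.dist x.2 y.2 ≤ W.length := by
  induction W with
  | nil => simp
  | @cons a b c hadj p ih =>
      have h1 : H.dist a.2 b.2 ≤ 1 := by
        rcases hadj with ⟨-, h⟩ | ⟨-, h⟩ | ⟨-, h⟩
        · rw [h]; simp [SimpleGraph.dist_self]
        · exact le_of_eq (SimpleGraph.dist_eq_one_iff_adj.mpr h)
        · exact le_of_eq (SimpleGraph.dist_eq_one_iff_adj.mpr h)
      calc H.dist a.2 c.2 ≤ H.dist a.2 b.2 + H.dist b.2 c.2 := hH.dist_triangle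
        _ ≤ 1 + p.length := Nat.add_le_add h1 ih
        _ = (p.cons hadj).length := by rw [SimpleGraph.Walk.length_cons]; omega

/-- A vertex of a feasible set always has a neighbor outside the set (assuming the graph is
connected with at least two vertices). -/
lemma exists_nbr_notMem {β : Type*} [Fintype β] {H : SimpleGraph β} (hH : H.Connected)
    (hcard : 2 ≤ Fintype.card β) (T : Set β)
    (hfeas : ∀ x ∈ T, ∀ y ∈ T, H.Adj x y → ∃ z ∉ T, H.Adj x z ∧ H.Adj y z)
    (b : β) (hb : b ∈ T) : ∃ z, z ∉ T ∧ H.Adj b z := by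
  have : Nontrivial β := Fintype.one_lt_card_iff_nontrivial.mp hcard
  obtain ⟨y, hy⟩ := exists_ne b
  obtain ⟨p⟩ := hH.preconnected b y
  have hlen : 0 < p.length := by
    rcases Nat.eq_zero_or_pos p.length with h | h
    · exact absurd (SimpleGraph.Walk.eq_of_length_eq_zero h).symm hy
    · exact h
  have hadj : H.Adj b (p.getVert 1) := by
    have h01 := p.adj_getVert_succ (i := 0) hlen
    rwa [p.getVert_zero] at h01
  by_cases hz : p.getVert 1 ∈ T
  · obtain ⟨z, hzT, hz1, _⟩ := hfeas b hb _ hz hadj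
    exact ⟨z, hzT, hz1⟩
  · exact ⟨_, hz, hadj⟩

/-- The "lazy walk" lemma: a shortest walk avoiding `T` internally can be stretched to any
length `n ≥` its length as a lazy walk still avoiding `T` internally. -/
lemma lazy_walk {β : Type*} [Fintype β] {H : SimpleGraph β} (hH : H.Connected)
    (hcard : 2 ≤ Fintype.card β) {T : Set β}
    (hfeas : ∀ x ∈ T, ∀ y ∈ T, H.Adj x y → ∃ z ∉ T, H.Adj x z ∧ H.Adj y z)
    {h h' : β} (Q : H.Walk h h') (hQ : Q.length = H.dist h h')
    (hvis : ∀ v ∈ Q.support, v ∈ T → v = h ∨ v = h') (n : ℕ) (hn : Q.length ≤ n) :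
    ∃ σ : ℕ → β, σ 0 = h ∧ σ n = h' ∧
      (∀ i < n, σ i = σ (i + 1) ∨ H.Adj (σ i) (σ (i + 1))) ∧
      (∀ i, 0 < i → i < n → σ i ∉ T) := by
  have hint : ∀ {i : ℕ}, 0 < i → i < Q.length → Q.getVert i ∉ T :=
    fun {i} h0 hi => internal_notMem T Q hQ hvis h0 hi
  rcases eq_or_lt_of_le hn with heq | hlt
  · -- exact length: use the walk itself
    refine ⟨Q.getVert, Q.getVert_zero, Q.getVert_of_length_le (le_of_eq heq),
      fun i hi => Or.inr (Q.adj_getVert_succ (by omega)), fun i h0 hi => hint h0 (by omega)⟩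
  · -- strictly longer
    rcases Nat.lt_or_ge Q.length 2 with hk2 | hk2
    · rcases Nat.lt_or_ge Q.length 1 with hk1 | hk1
      · -- length 0 : h = h'
        have hk0 : Q.length = 0 := by omega
        have hh : h = h' := (Q.getVert_zero).symm.trans (Q.getVert_of_length_le (by omega))
        by_cases hT : h ∈ T ∧ 2 ≤ n
        · obtain ⟨z, hzT, hz⟩ := exists_nbr_notMem hH hcard T hfeas h hT.1
          refine ⟨fun i => if i = 0 ∨ i = n then h else z, ?_, ?_, ?_, ?_⟩
          · simp
          · beta_reduce
            rw [if_pos (Or.inr rfl)]; exact hh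
          · intro i hi
            beta_reduce
            by_cases h0 : i = 0
            · subst h0
              rw [if_pos (Or.inl rfl), if_neg (by omega)]
              exact Or.inr hz
            · by_cases h1 : i + 1 = n
              · rw [if_neg (by omega), if_pos (Or.inr h1)]
                exact Or.inr hz.symm
              · rw [if_neg (by omega), if_neg (by omega)]
                exact Or.inl rfl
          · intro i h0 hi
            beta_reduce
            rw [if_neg (by omega)]
            exact hzT
        · refine ⟨fun _ => h, rfl, hh, fun i _ => Or.inl rfl, ?_⟩
          intro i h0 hi hmem
          rw [not_and_or] at hT
          rcases hT with hT | hT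
          · exact hT hmem
          · omega
      · -- length 1 : h and h' adjacent, n ≥ 2
        have hk1' : Q.length = 1 := by omega
        have hadj : H.Adj h h' := by
          have h01 := Q.adj_getVert_succ (i := 0) (by omega)
          rwa [Q.getVert_zero, Q.getVert_of_length_le (by omega)] at h01
        by_cases hhT : h ∈ T
        · by_cases hh'T : h' ∈ T
          · obtain ⟨z, hzT, hz1, hz2⟩ := hfeas h hhT h' hh'T hadj
            refine ⟨fun i => if i = 0 then h else if i = n then h' else z, rfl, ?_, ?_, ?_⟩
            · beta_reduce
              rw [if_neg (by omega), if_pos rfl]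
            · intro i hi
              beta_reduce
              by_cases h0 : i = 0
              · subst h0
                rw [if_pos rfl, if_neg (by omega), if_neg (by omega)]
                exact Or.inr hz1
              · by_cases h1 : i + 1 = n
                · rw [if_neg h0, if_neg (by omega), if_pos h1, if_neg (by omega)]
                  exact Or.inr hz2.symm
                · rw [if_neg h0, if_neg (by omega), if_neg (by omega), if_neg (by omega)]
                  exact Or.inl rfl
            · intro i h0 hi
              beta_reduce
              rw [if_neg (by omega), if_neg (by omega)]
              exact hzT
          · refine ⟨fun i => if i = 0 then h else h', rfl, by beta_reduce; rw [if_neg (by omega)], ?_, ?_⟩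
            · intro i hi
              beta_reduce
              by_cases h0 : i = 0
              · subst h0
                rw [if_pos rfl, if_neg (by omega)]
                exact Or.inr hadj
              · rw [if_neg h0, if_neg (by omega)]
                exact Or.inl rfl
            · intro i h0 hi
              beta_reduce
              rw [if_neg (by omega)]
              exact hh'T
        · refine ⟨fun i => if i = n then h' else h, by beta_reduce; rw [if_neg (by omega)], by beta_reduce; rw [if_pos rfl],
            ?_, ?_⟩
          · intro i hi
            beta_reduce
            by_cases h1 : i + 1 = n
            · rw [if_neg (by omega), if_pos h1]
              exact Or.inr hadj
            · rw [if_neg (by omega), if_neg (by omega)]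
              exact Or.inl rfl
          · intro i h0 hi
            beta_reduce
            rw [if_neg (by omega)]
            exact hhT
    · -- length ≥ 2 : follow the walk, parking at its penultimate vertex
      refine ⟨fun i => if i = n then h' else Q.getVert (min i (Q.length - 1)), ?_, ?_, ?_, ?_⟩
      · beta_reduce
        rw [if_neg (by omega)]
        simpa [Nat.min_eq_left (by omega : 0 ≤ Q.length - 1)] using Q.getVert_zero
      · beta_reduce
        rw [if_pos rfl]
      · intro i hi
        beta_reduce
        by_cases h1 : i + 1 = n
        · rw [if_neg (by omega), if_pos h1]
          have hmin : min i (Q.length - 1) = Q.length - 1 := Nat.min_eq_right (by omega)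
          rw [hmin]
          have ha := Q.adj_getVert_succ (i := Q.length - 1) (by omega)
          rw [show Q.length - 1 + 1 = Q.length by omega, Q.getVert_length] at ha
          exact Or.inr ha
        · rw [if_neg (by omega), if_neg (by omega)]
          by_cases him : i < Q.length - 1
          · rw [Nat.min_eq_left (by omega), Nat.min_eq_left (by omega)]
            exact Or.inr (Q.adj_getVert_succ (by omega))
          · rw [Nat.min_eq_right (by omega), Nat.min_eq_right (by omega)]
            exact Or.inl rfl
      · intro i h0 hi
        beta_reduce
        rw [if_neg (by omega)]
        exact hint (by omega) (by omega)

/-- Construct a strong-product walk out of a shortest walk in the first factor and a lazy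
walk in the second factor. -/
lemma build_walk {α β : Type*} {G : SimpleGraph α} {H : SimpleGraph β} {g g' : α} {h h' : β}
    (S : Set α) (T : Set β) (P : G.Walk g g') (hP : P.length = G.dist g g')
    (hPvis : ∀ v ∈ P.support, v ∈ S → v = g ∨ v = g')
    (σ : ℕ → β) (hσ0 : σ 0 = h) (hσn : σ P.length = h')
    (hstep : ∀ i < P.length, σ i = σ (i + 1) ∨ H.Adj (σ i) (σ (i + 1)))
    (hint : ∀ i, 0 < i → i < P.length → σ i ∉ T) :
    ∃ W : (strongProd G H).Walk (g, h) (g', h'), W.length = P.length ∧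
      ∀ v ∈ W.support, (v.1 ∈ S ∨ v.2 ∈ T) → v = (g, h) ∨ v = (g', h') := by
  set f : ℕ → α × β := fun i => (P.getVert i, σ i) with hf
  have hadj : ∀ i < P.length, (strongProd G H).Adj (f i) (f (i + 1)) := by
    intro i hi
    have hGadj : G.Adj (P.getVert i) (P.getVert (i + 1)) := P.adj_getVert_succ hi
    rcases hstep i hi with hEq | hHadj
    · exact Or.inl ⟨hGadj, hEq⟩
    · exact Or.inr (Or.inr ⟨hGadj, hHadj⟩)
  have e0 : f 0 = (g, h) := by simp [hf, P.getVert_zero, hσ0]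
  have en : f P.length = (g', h') := by simp [hf, P.getVert_length, hσn]
  refine ⟨(walkOfFn (strongProd G H) f P.length hadj).copy e0 en, ?_, ?_⟩
  · rw [SimpleGraph.Walk.length_copy, walkOfFn_length]
  · intro v hv hvm
    rw [SimpleGraph.Walk.support_copy] at hv
    obtain ⟨i, hin, rfl⟩ := walkOfFn_support _ f P.length hadj v hv
    rcases Nat.eq_zero_or_pos i with h0 | h0
    · subst h0; exact Or.inl e0
    · rcases eq_or_lt_of_le hin with hiN | hiN
      · subst hiN; exact Or.inr en
      · exfalso
        rcases hvm with hvm | hvm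
        · exact internal_notMem S P hP hPvis h0 hiN hvm
        · exact hint i h0 hiN hvm

/-- The graph homomorphism swapping the two factors of a strong product. -/
def swapHom {α β : Type*} (G : SimpleGraph α) (H : SimpleGraph β) :
    strongProd H G →g strongProd G H where
  toFun := Prod.swap
  map_rel' := by
    rintro ⟨a, b⟩ ⟨c, d⟩ (⟨h1, h2⟩ | ⟨h1, h2⟩ | ⟨h1, h2⟩)
    · exact Or.inr (Or.inl ⟨h2, h1⟩)
    · exact Or.inl ⟨h2, h1⟩
    · exact Or.inr (Or.inr ⟨h2, h1⟩)

/-- A strong-product walk whose length equals one of the coordinate distances (each being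
at least the other) is a shortest walk. -/
lemma length_eq_dist_of_max {α β : Type*} {G : SimpleGraph α} {H : SimpleGraph β}
    (hG : G.Connected) (hH : H.Connected) {x y : α × β} (W : (strongProd G H).Walk x y)
    (hW : W.length = G.dist x.1 y.1 ∨ W.length = H.dist x.2 y.2) :
    W.length = (strongProd G H).dist x y := by
  have h1 := SimpleGraph.dist_le W
  rcases eq_or_ne ((strongProd G H).dist x y) 0 with h0 | h0
  · have hxy : x = y := W.reachable.dist_eq_zero_iff.mp h0
    subst hxy
    rw [h0]
    rcases hW with h | h <;> rw [h] <;> simp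
  · obtain ⟨W', hW'⟩ := SimpleGraph.exists_walk_of_dist_ne_zero h0
    have hf := dist_fst_le hG W'
    have hs := dist_snd_le hH W'
    rcases hW with h | h <;> omega

/-- The union construction is a total mutual-visibility set of the strong product. -/
lemma tmv_prod {α β : Type*} [Fintype α] [Fintype β] {G : SimpleGraph α} {H : SimpleGraph β}
    (hG : G.Connected) (hH : H.Connected)
    (hα : 2 ≤ Fintype.card α) (hβ : 2 ≤ Fintype.card β)
    {S : Set α} {T : Set β} (hS : IsFeasibleTMVSet G S) (hT : IsFeasibleTMVSet H T) :
    IsTMVSet (strongProd G H) (S ×ˢ (Set.univ : Set β) ∪ (Set.univ : Set α) ×ˢ T) := by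
  rintro ⟨g, h⟩ ⟨g', h'⟩
  have hmem : ∀ v : α × β, v ∈ (S ×ˢ (Set.univ : Set β) ∪ (Set.univ : Set α) ×ˢ T) ↔
      (v.1 ∈ S ∨ v.2 ∈ T) := by
    intro v
    simp [Set.mem_union, Set.mem_prod]
  rcases le_total (H.dist h h') (G.dist g g') with hle | hle
  · obtain ⟨P, hPlen, hPvis⟩ := hS.1 g g'
    obtain ⟨Q, hQlen, hQvis⟩ := hT.1 h h'
    obtain ⟨σ, hσ0, hσn, hstep, hintσ⟩ := lazy_walk hH hβ hT.2 Q hQlen hQvis P.length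
      (by omega)
    obtain ⟨W, hWlen, hWvis⟩ := build_walk S T P hPlen hPvis σ hσ0 hσn hstep hintσ
    refine ⟨W, ?_, ?_⟩
    · exact length_eq_dist_of_max hG hH W (Or.inl (by rw [hWlen, hPlen]))
    · intro v hv hvX
      exact hWvis v hv ((hmem v).mp hvX)
  · obtain ⟨P, hPlen, hPvis⟩ := hT.1 h h'
    obtain ⟨Q, hQlen, hQvis⟩ := hS.1 g g'
    obtain ⟨σ, hσ0, hσn, hstep, hintσ⟩ := lazy_walk hG hα hS.2 Q hQlen hQvis P.length
      (by omega)
    obtain ⟨W0, hW0len, hW0vis⟩ := build_walk T S P hPlen hPvis σ hσ0 hσn hstep hintσ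
    refine ⟨W0.map (swapHom G H), ?_, ?_⟩
    · refine length_eq_dist_of_max hG hH _ (Or.inr ?_)
      exact (SimpleGraph.Walk.length_map _ _).trans (hW0len.trans hPlen)
    · intro v hv hvX
      replace hv : v ∈ W0.support.map (swapHom G H) := by
        rw [← SimpleGraph.Walk.support_map]; exact hv
      rw [List.mem_map] at hv
      obtain ⟨u, hu, rfl⟩ := hv
      have := (hmem _).mp hvX
      have hmem' : u.1 ∈ T ∨ u.2 ∈ S := by
        rcases this with hc | hc
        · exact Or.inr hc
        · exact Or.inl hc
      rcases hW0vis u hu hmem' with h1 | h1 <;> subst h1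
      · exact Or.inl rfl
      · exact Or.inr rfl

lemma ncard_prod' {α β : Type*} (S : Set α) (T : Set β) :
    (S ×ˢ T).ncard = S.ncard * T.ncard := by
  rw [← Nat.card_coe_set_eq, ← Nat.card_coe_set_eq, ← Nat.card_coe_set_eq,
    Nat.card_congr (Equiv.Set.prod S T), Nat.card_prod]

end Aux

theorem stmt_8 {α β : Type*} [Fintype α] [Fintype β]
    (G : SimpleGraph α) (H : SimpleGraph β) (hG : G.Connected) (hH : H.Connected)
    (hα : 2 ≤ Fintype.card α) (hβ : 2 ≤ Fintype.card β)
    (hfG : ∃ S : Set α, IsFeasibleTMVSet G S ∧ S.ncard = muT G)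
    (hfH : ∃ S : Set β, IsFeasibleTMVSet H S ∧ S.ncard = muT H) :
    muT G * Fintype.card β + muT H * Fintype.card α - muT G * muT H
      ≤ muT (strongProd G H) := by
  obtain ⟨S, hS, hScard⟩ := hfG
  obtain ⟨T, hT, hTcard⟩ := hfH
  set X := S ×ˢ (Set.univ : Set β) ∪ (Set.univ : Set α) ×ˢ T with hXdef
  have hX : IsTMVSet (strongProd G H) X := tmv_prod hG hH hα hβ hS hT
  have hcard : X.ncard + S.ncard * T.ncard =
      S.ncard * Fintype.card β + Fintype.card α * T.ncard := by
    have hinter : S ×ˢ (Set.univ : Set β) ∩ (Set.univ : Set α) ×ˢ T = S ×ˢ T := by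
      rw [Set.prod_inter_prod]; simp
    have hkey := Set.ncard_union_add_ncard_inter (S ×ˢ (Set.univ : Set β))
      ((Set.univ : Set α) ×ˢ T) (Set.toFinite _) (Set.toFinite _)
    rw [hinter, ncard_prod', ncard_prod', ncard_prod'] at hkey
    rw [hXdef]
    simpa [Set.ncard_univ, Nat.card_eq_fintype_card] using hkey
  have hle : X.ncard ≤ muT (strongProd G H) := by
    apply le_csSup
    · refine ⟨Fintype.card (α × β), ?_⟩
      rintro m ⟨Y, -, rfl⟩
      calc Y.ncard ≤ (Set.univ : Set (α × β)).ncard :=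
            Set.ncard_le_ncard (Set.subset_univ _) (Set.toFinite _)
        _ = _ := by rw [Set.ncard_univ, Nat.card_eq_fintype_card]
    · exact ⟨X, hX, rfl⟩
  rw [← hScard, ← hTcard]
  have hmc : Fintype.card α * T.ncard = T.ncard * Fintype.card α := Nat.mul_comm _ _
  have hfinal : S.ncard * Fintype.card β + T.ncard * Fintype.card α - S.ncard * T.ncard
      ≤ X.ncard := by
    rw [tsub_le_iff_right]
    omega
  exact hfinal.trans hle
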